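/- If the covariant derivatives of the basic invariant a of a planar 4-web satisfy a₂ = 0 and the AGL linearizability conditions hold with K = K₁ = K₂ = 0 (and consequently a₁₂ = a₂₂ = a₁₁₂ = a₁₂₂ = a₂₂₂ = 0), then necessarily a₁₁ = (1−2a)a₁²/(a−a²) and a₁₁₁ = (6a²−6a+1)a₁³/(a−a²)²; i.e., a linearizable APW₁ web is an MW₁ web. -/

import Mathlib

/-!
The Akivis–Goldberg–Lychagin linearizability expressions for the covariant
derivatives `K₁`, `K₂` of the curvature of a planar 4-web (equations (24) and
(25) of the paper), as rational expressions in the curvature `K`, the basic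
invariant `a`, and its covariant derivatives `a₁, a₂, a_{ij}, a_{ijk}`.
-/

noncomputable def K₁lin (K a a₁ a₂ a₁₁ a₁₂ a₂₂ a₁₁₁ a₁₁₂ a₁₂₂ : ℝ) : ℝ :=
  (1/(a - a^2)) * ((1/3) * (a₁*(1-a) + a*a₂) * K - a₁₁₁ + (2+a)*a₁₁₂ - 2*a*a₁₂₂)
  + (1/(a - a^2)^2) * (((4-6*a)*a₁ + (-2+3*a+a^2)*a₂)*a₁₁
      + ((-6+7*a+2*a^2)*a₁ + (2*a-3*a^2)*a₂)*a₁₂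
      + (2*a*(1-a)*a₁ - 2*a^2*a₂)*a₂₂)
  + (1/(a - a^2)^3) * ((-3+8*a-6*a^2)*a₁^3 - 2*a^3*a₂^3
      + (6-15*a+9*a^2+2*a^3)*a₁^2*a₂ + (-2*a+6*a^2-3*a^3)*a₁*a₂^2)

noncomputable def K₂lin (K a a₁ a₂ a₁₁ a₁₂ a₂₂ a₁₁₂ a₁₂₂ a₂₂₂ : ℝ) : ℝ :=
  (1/(a - a^2)) * ((1/3) * (a₁ + a₂*(a-1)) * K + 2*a₁₁₂ - (2*a+1)*a₁₂₂ + a*a₂₂₂)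
  + (1/(a - a^2)^2) * ((2*a₁ + (2*a-2)*a₂)*a₁₁
      + ((-5+6*a)*a₁ + (2-3*a-2*a^2)*a₂)*a₁₂
      + ((1-a-2*a^2)*a₁ + 2*a^2*a₂)*a₂₂)
  + (1/(a - a^2)^3) * ((4*a-2)*a₁^3 + a^3*a₂^3
      + (5-12*a+6*a^2)*a₁^2*a₂ + (-2+5*a-3*a^2-2*a^3)*a₁*a₂^2)

/-- a linearizable `APW₁` web (`K = K₁ = K₂ = 0`, `a₂ = 0`,
hence `a₁₂ = a₂₂ = a₁₁₂ = a₁₂₂ = a₂₂₂ = 0`) is an `MW₁` web. -/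
theorem linearizable_APW1_is_MW1 (a a₁ a₁₁ a₁₁₁ : ℝ)
    (h0 : a ≠ 0) (h1 : a ≠ 1) (ha₁ : a₁ ≠ 0)
    (hlin₁ : K₁lin 0 a a₁ 0 a₁₁ 0 0 a₁₁₁ 0 0 = 0)
    (hlin₂ : K₂lin 0 a a₁ 0 a₁₁ 0 0 0 0 0 = 0) :
    a₁₁ = (1 - 2*a) * a₁^2 / (a - a^2) ∧
    a₁₁₁ = (6*a^2 - 6*a + 1) * a₁^3 / (a - a^2)^2 := by
  have hd : a - a^2 ≠ 0 := by
    have : a - a^2 = a * (1 - a) := by ring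
    rw [this]
    exact mul_ne_zero h0 (sub_ne_zero.mpr (Ne.symm h1))
  unfold K₁lin at hlin₁
  unfold K₂lin at hlin₂
  field_simp at hlin₁ hlin₂
  have key2 : a₁₁ * (a - a^2) = (1 - 2*a) * a₁^2 := by
    apply mul_left_cancel₀
      (mul_ne_zero (mul_ne_zero two_ne_zero ha₁) (pow_ne_zero 2 hd))
    linear_combination (a - a^2)^2/3 * hlin₂
  have key3 : a₁₁₁ * (a - a^2)^2 = (6*a^2 - 6*a + 1) * a₁^3 := by
    apply mul_left_cancel₀ (neg_ne_zero.mpr (pow_ne_zero 3 hd))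
    linear_combination (a - a^2)^3/3 * (hlin₁ - 3*(4-6*a)*a₁*key2)
  constructor
  · rw [eq_div_iff hd]; linear_combination key2
  · rw [eq_div_iff (pow_ne_zero 2 hd)]; linear_combination key3
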